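/- With C = (c_1,…,c_k) an orthonormal basis of C = T U and Q the orthogonal projection onto span{c_i}, the approximation x_p^δ = Σ_i ⟨y^δ, c_i⟩ u_i (where T u_i = c_i) satisfies ‖x_p† − x_p^δ‖ ≤ ‖T‖ √(‖G_U‖_F Σ_l ‖u_l‖²) · δ whenever ‖y − y^δ‖ ≤ δ, where x_p† = Σ_i ⟨y, c_i⟩ u_i and G_U is the Gram matrix of the u_i. -/
import Mathlib


open scoped RealInnerProductSpace

theorem projected_part_error_bound
    {X Y : Type*} [NormedAddCommGroup X] [InnerProductSpace ℝ X]
    [NormedAddCommGroup Y] [InnerProductSpace ℝ Y]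
    (T : X →L[ℝ] Y) {k : ℕ} (u : Fin k → X)
    (hc : Orthonormal ℝ (fun i => T (u i)))
    (y yδ : Y) (δ : ℝ) (hδ : ‖y - yδ‖ ≤ δ) :
    ‖(∑ i, ⟪y, T (u i)⟫ • u i) - (∑ i, ⟪yδ, T (u i)⟫ • u i)‖
      ≤ ‖T‖ * Real.sqrt ((Real.sqrt (∑ i, ∑ j, (⟪u i, u j⟫) ^ 2)) * ∑ l, ‖u l‖ ^ 2) * δ := by
  set e := y - yδ with he
  set a : Fin k → ℝ := fun i => ⟪e, T (u i)⟫ with ha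
  set G : ℝ := Real.sqrt (∑ i, ∑ j, (⟪u i, u j⟫) ^ 2) with hG
  set U : ℝ := ∑ l, ‖u l‖ ^ 2 with hU
  have hδ0 : 0 ≤ δ := le_trans (norm_nonneg _) hδ
  have hG0 : 0 ≤ G := Real.sqrt_nonneg _
  have hU0 : 0 ≤ U := Finset.sum_nonneg fun l _ => by positivity
  have hdiff : (∑ i, ⟪y, T (u i)⟫ • u i) - (∑ i, ⟪yδ, T (u i)⟫ • u i)
      = ∑ i, a i • u i := by
    rw [← Finset.sum_sub_distrib]
    refine Finset.sum_congr rfl fun i _ => ?_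
    simp only [ha, he, inner_sub_left, sub_smul]
  rw [hdiff]
  rcases Nat.eq_zero_or_pos k with hk | hk
  · subst hk
    simp [Finset.univ_eq_empty]
    positivity
  -- squared norm identity
  have h1 : ‖∑ i, a i • u i‖ ^ 2 = ∑ i, ∑ j, (a i * a j) * ⟪u i, u j⟫ := by
    rw [← real_inner_self_eq_norm_sq]
    rw [sum_inner]
    refine Finset.sum_congr rfl fun i _ => ?_
    rw [inner_sum]
    refine Finset.sum_congr rfl fun j _ => ?_
    rw [real_inner_smul_left, real_inner_smul_right]
    ring
  -- Cauchy-Schwarz on the double sum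
  have h2 : ∑ i, ∑ j, (a i * a j) * ⟪u i, u j⟫ ≤ (∑ i, a i ^ 2) * G := by
    have hcs := Real.sum_mul_le_sqrt_mul_sqrt (Finset.univ : Finset (Fin k × Fin k))
      (fun p => a p.1 * a p.2) (fun p => ⟪u p.1, u p.2⟫)
    have hflat : ∑ i, ∑ j, (a i * a j) * ⟪u i, u j⟫
        = ∑ p : Fin k × Fin k, (a p.1 * a p.2) * ⟪u p.1, u p.2⟫ := by
      rw [Fintype.sum_prod_type]
    have hflat2 : (∑ p : Fin k × Fin k, (a p.1 * a p.2) ^ 2) = (∑ i, a i ^ 2) ^ 2 := by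
      rw [Fintype.sum_prod_type, sq (∑ i, a i ^ 2), Finset.sum_mul_sum]
      exact Finset.sum_congr rfl fun i _ => Finset.sum_congr rfl fun j _ => by ring
    have hflat3 : (∑ p : Fin k × Fin k, (⟪u p.1, u p.2⟫ : ℝ) ^ 2) = ∑ i, ∑ j, (⟪u i, u j⟫) ^ 2 := by
      rw [Fintype.sum_prod_type]
    rw [hflat]
    calc ∑ p : Fin k × Fin k, (a p.1 * a p.2) * ⟪u p.1, u p.2⟫
        ≤ Real.sqrt (∑ p : Fin k × Fin k, (a p.1 * a p.2) ^ 2) *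
          Real.sqrt (∑ p : Fin k × Fin k, (⟪u p.1, u p.2⟫ : ℝ) ^ 2) := hcs
      _ = (∑ i, a i ^ 2) * G := by
          rw [hflat2, hflat3, ← hG, Real.sqrt_sq (Finset.sum_nonneg fun i _ => sq_nonneg _)]
  -- Bessel
  have h3 : ∑ i, a i ^ 2 ≤ ‖e‖ ^ 2 := by
    have := hc.sum_inner_products_le (s := Finset.univ) e
    calc ∑ i, a i ^ 2 = ∑ i, ‖⟪T (u i), e⟫‖ ^ 2 := by
          refine Finset.sum_congr rfl fun i _ => ?_
          rw [ha, real_inner_comm]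
          simp [Real.norm_eq_abs, sq_abs]
      _ ≤ ‖e‖ ^ 2 := this
  -- ‖T‖² * U ≥ 1
  have h4 : 1 ≤ ‖T‖ ^ 2 * U := by
    have i0 : Fin k := ⟨0, hk⟩
    have h1' : ‖T (u i0)‖ = 1 := hc.1 i0
    have hle : (1 : ℝ) ≤ ‖T‖ ^ 2 * ‖u i0‖ ^ 2 := by
      have := T.le_opNorm (u i0)
      rw [h1'] at this
      calc (1 : ℝ) = 1 ^ 2 := by ring
        _ ≤ (‖T‖ * ‖u i0‖) ^ 2 := by
            apply pow_le_pow_left₀ (by norm_num) this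
        _ = ‖T‖ ^ 2 * ‖u i0‖ ^ 2 := by ring
    refine hle.trans ?_
    apply mul_le_mul_of_nonneg_left _ (sq_nonneg _)
    exact Finset.single_le_sum (f := fun l => ‖u l‖ ^ 2) (fun l _ => sq_nonneg _)
      (Finset.mem_univ i0)
  -- combine
  have hsq : ‖∑ i, a i • u i‖ ^ 2 ≤ (‖T‖ * Real.sqrt (G * U) * δ) ^ 2 := by
    have hRHS : (‖T‖ * Real.sqrt (G * U) * δ) ^ 2 = ‖T‖ ^ 2 * (G * U) * δ ^ 2 := by
      rw [mul_pow, mul_pow, Real.sq_sqrt (mul_nonneg hG0 hU0)]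
    rw [hRHS, h1]
    calc ∑ i, ∑ j, (a i * a j) * ⟪u i, u j⟫ ≤ (∑ i, a i ^ 2) * G := h2
      _ ≤ ‖e‖ ^ 2 * G := mul_le_mul_of_nonneg_right h3 hG0
      _ ≤ δ ^ 2 * G := by
          apply mul_le_mul_of_nonneg_right _ hG0
          exact pow_le_pow_left₀ (norm_nonneg _) hδ 2
      _ ≤ δ ^ 2 * (G * (‖T‖ ^ 2 * U)) := by
          apply mul_le_mul_of_nonneg_left _ (sq_nonneg _)
          calc G = G * 1 := by ring
            _ ≤ G * (‖T‖ ^ 2 * U) := mul_le_mul_of_nonneg_left h4 hG0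
      _ = ‖T‖ ^ 2 * (G * U) * δ ^ 2 := by ring
  have hRHS0 : 0 ≤ ‖T‖ * Real.sqrt (G * U) * δ := by positivity
  calc ‖∑ i, a i • u i‖ = Real.sqrt (‖∑ i, a i • u i‖ ^ 2) := by
        rw [Real.sqrt_sq (norm_nonneg _)]
    _ ≤ Real.sqrt ((‖T‖ * Real.sqrt (G * U) * δ) ^ 2) := Real.sqrt_le_sqrt hsq
    _ = ‖T‖ * Real.sqrt (G * U) * δ := Real.sqrt_sq hRHS0
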